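/- Let X be a complex Banach space, θ > 0, and (e_j)_{j≥1} a sequence of nonnegative reals. Suppose given bounded linear operators E_j^k on X, for integers j ≥ 1 and k ≤ 1, satisfying ‖E_j^k‖ ≤ e_j θ^{−k}. For j ≥ 1 and integers k < 0 define D_j^k := Σ_{n=1}^{∞} Σ_{α} Σ_{β} E_{α₁}^{β₁} E_{α₂}^{β₂} ⋯ E_{α_n}^{β_n}, where α runs over n-tuples of positive integers with α₁+⋯+α_n = j and β runs over n-tuples of integers with β_i ≤ 1 for all i and β₁+⋯+β_n = k (this is a finite sum, since necessarily n ≤ j and each β_i ≥ k−(n−1)). Then for each j ≥ 1 there is a finite constant d_j such that ‖D_j^k‖ ≤ d_j |k|^{j−1} θ^{−k} for all integers k < 0. -/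

import Mathlib

/- The operator `D_j^k`: the sum over all ordered compositions
`E_{α₁}^{β₁} ⋯ E_{α_n}^{β_n}` with `αᵢ ≥ 1`, `∑ αᵢ = j`, `βᵢ ≤ 1`, `∑ βᵢ = k`. -/
noncomputable def stmt10D {X : Type*} [NormedAddCommGroup X] [NormedSpace ℂ X]
    (E : ℕ → ℤ → X →L[ℂ] X) (j : ℕ) (k : ℤ) : X →L[ℂ] X :=
  ∑ n ∈ Finset.Icc 1 j,
    ∑ a ∈ (Fintype.piFinset fun _ : Fin n => Finset.Icc 1 j).filter
        (fun a => ∑ i, a i = j),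
      ∑ b ∈ (Fintype.piFinset fun _ : Fin n => Finset.Icc (k - ((n : ℤ) - 1)) 1).filter
        (fun b => ∑ i, b i = k),
        (List.ofFn fun i => E (a i) (b i)).prod

/- If `‖E_j^k‖ ≤ e_j θ^{−k}` then for each `j ≥ 1` there is `d_j` with
`‖D_j^k‖ ≤ d_j |k|^{j−1} θ^{−k}` for all integers `k < 0`. -/
private lemma aux_prod_zpow (θ : ℝ) (hθ : θ ≠ 0) {ι : Type*} (s : Finset ι) (f : ι → ℤ) :
    ∏ i ∈ s, θ ^ f i = θ ^ (∑ i ∈ s, f i) := by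
  classical
  induction s using Finset.cons_induction with
  | empty => simp
  | cons a s h ih => rw [Finset.prod_cons, Finset.sum_cons, ih, zpow_add₀ hθ]

private lemma aux_card_filter (n : ℕ) (k : ℤ) (s : Finset ℤ) :
    (((Fintype.piFinset fun _ : Fin (n+1) => s)).filter (fun b => ∑ i, b i = k)).card
      ≤ s.card ^ n := by
  classical
  have hcard : ((Fintype.piFinset fun _ : Fin n => s)).card = s.card ^ n := by
    simp [Fintype.card_piFinset]
  rw [← hcard]
  apply Finset.card_le_card_of_injOn (fun b (i : Fin n) => b i.castSucc)
  · intro b hb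
    rw [Finset.mem_coe, Finset.mem_filter] at hb
    rw [Finset.mem_coe, Fintype.mem_piFinset]
    intro i
    exact (Fintype.mem_piFinset.mp hb.1) _
  · intro b₁ h₁ b₂ h₂ h
    simp only [Finset.coe_filter, Set.mem_setOf_eq] at h₁ h₂
    funext i
    refine Fin.lastCases ?_ (fun i => congrFun h i) i
    have e1 := h₁.2
    have e2 := h₂.2
    rw [Fin.sum_univ_castSucc] at e1 e2
    have hsum : ∑ i : Fin n, b₁ i.castSucc = ∑ i : Fin n, b₂ i.castSucc :=
      Finset.sum_congr rfl (fun i _ => congrFun h i)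
    omega

theorem stmt10 {X : Type*} [NormedAddCommGroup X] [NormedSpace ℂ X] [CompleteSpace X]
    (θ : ℝ) (hθ : 0 < θ) (e : ℕ → ℝ) (he : ∀ j, 0 ≤ e j)
    (E : ℕ → ℤ → X →L[ℂ] X)
    (hE : ∀ (j : ℕ) (k : ℤ), 1 ≤ j → k ≤ 1 → ‖E j k‖ ≤ e j * θ ^ (-k)) :
    ∀ j : ℕ, 1 ≤ j → ∃ d : ℝ, ∀ k : ℤ, k < 0 →
      ‖stmt10D E j k‖ ≤ d * |(k : ℝ)| ^ (j - 1) * θ ^ (-k) := by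
  intro j hj
  classical
  set C : ℝ := ∑ n ∈ Finset.Icc 1 j,
    ∑ a ∈ (Fintype.piFinset fun _ : Fin n => Finset.Icc 1 j).filter
        (fun a => ∑ i, a i = j), ∏ i, e (a i) with hC
  refine ⟨(j+2 : ℝ)^(j-1) * C, ?_⟩
  intro k hk
  have hθk : (0:ℝ) < θ ^ (-k) := zpow_pos hθ _
  have hk1 : (1:ℝ) ≤ |(k : ℝ)| := by
    rw [← Int.cast_abs]
    exact_mod_cast Int.one_le_abs (by omega)
  have hk0 : (0:ℝ) ≤ |(k : ℝ)| := abs_nonneg _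
  -- bound each b-sum
  have key : ∀ n ∈ Finset.Icc 1 j,
      ∀ a ∈ (Fintype.piFinset fun _ : Fin n => Finset.Icc 1 j).filter
        (fun a => ∑ i, a i = j),
      ‖∑ b ∈ (Fintype.piFinset fun _ : Fin n => Finset.Icc (k - ((n : ℤ) - 1)) 1).filter
        (fun b => ∑ i, b i = k), (List.ofFn fun i => E (a i) (b i)).prod‖
        ≤ ((j+2 : ℝ) * |(k : ℝ)|)^(j-1) * (∏ i, e (a i)) * θ ^ (-k) := by
    intro n hn a ha
    rw [Finset.mem_Icc] at hn
    rw [Finset.mem_filter, Fintype.mem_piFinset] at ha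
    have hterm : ∀ b ∈ (Fintype.piFinset fun _ : Fin n => Finset.Icc (k - ((n : ℤ) - 1)) 1).filter
        (fun b => ∑ i, b i = k),
        ‖(List.ofFn fun i => E (a i) (b i)).prod‖ ≤ (∏ i, e (a i)) * θ ^ (-k) := by
      intro b hb
      rw [Finset.mem_filter, Fintype.mem_piFinset] at hb
      have hne : (List.ofFn fun i => E (a i) (b i)) ≠ [] := by
        simp only [ne_eq, List.ofFn_eq_nil_iff]
        omega
      calc ‖(List.ofFn fun i => E (a i) (b i)).prod‖
          ≤ ((List.ofFn fun i => E (a i) (b i)).map norm).prod := List.norm_prod_le' hne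
        _ = ∏ i, ‖E (a i) (b i)‖ := by rw [List.map_ofFn, List.prod_ofFn]; rfl
        _ ≤ ∏ i, e (a i) * θ ^ (-(b i)) := by
            apply Finset.prod_le_prod (fun i _ => norm_nonneg _)
            intro i _
            have ha1 : 1 ≤ a i := (Finset.mem_Icc.mp (ha.1 i)).1
            have hb1 : b i ≤ 1 := (Finset.mem_Icc.mp (hb.1 i)).2
            exact hE _ _ ha1 hb1
        _ = (∏ i, e (a i)) * θ ^ (-k) := by
            rw [Finset.prod_mul_distrib, aux_prod_zpow θ (ne_of_gt hθ), Finset.sum_neg_distrib,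
              hb.2]
    calc ‖∑ b ∈ (Fintype.piFinset fun _ : Fin n => Finset.Icc (k - ((n : ℤ) - 1)) 1).filter
          (fun b => ∑ i, b i = k), (List.ofFn fun i => E (a i) (b i)).prod‖
        ≤ ∑ b ∈ (Fintype.piFinset fun _ : Fin n => Finset.Icc (k - ((n : ℤ) - 1)) 1).filter
          (fun b => ∑ i, b i = k), ‖(List.ofFn fun i => E (a i) (b i)).prod‖ :=
          norm_sum_le _ _
      _ ≤ ∑ _b ∈ (Fintype.piFinset fun _ : Fin n => Finset.Icc (k - ((n : ℤ) - 1)) 1).filter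
          (fun b => ∑ i, b i = k), (∏ i, e (a i)) * θ ^ (-k) := Finset.sum_le_sum hterm
      _ = (((Fintype.piFinset fun _ : Fin n => Finset.Icc (k - ((n : ℤ) - 1)) 1).filter
          (fun b => ∑ i, b i = k)).card : ℝ) * ((∏ i, e (a i)) * θ ^ (-k)) := by
          rw [Finset.sum_const, nsmul_eq_mul]
      _ ≤ ((j+2 : ℝ) * |(k : ℝ)|)^(j-1) * ((∏ i, e (a i)) * θ ^ (-k)) := by
          apply mul_le_mul_of_nonneg_right _
            (mul_nonneg (Finset.prod_nonneg fun i _ => he _) (le_of_lt hθk))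
          -- card bound
          obtain ⟨m, rfl⟩ : ∃ m, n = m + 1 := ⟨n - 1, by omega⟩
          calc ((((Fintype.piFinset fun _ : Fin (m+1) =>
                Finset.Icc (k - (((m:ℤ)+1) - 1)) 1)).filter (fun b => ∑ i, b i = k)).card : ℝ)
              ≤ ((Finset.Icc (k - (((m:ℤ)+1) - 1)) 1).card : ℝ) ^ m := by
                exact_mod_cast aux_card_filter m k _
            _ ≤ ((j+2 : ℝ) * |(k : ℝ)|) ^ m := by
                apply pow_le_pow_left₀ (Nat.cast_nonneg _)
                rw [Int.card_Icc]
                have hcast : ((1 + 1 - (k - (((m:ℤ)+1) - 1))).toNat : ℝ)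
                    = ((m : ℝ) + 2 - (k : ℝ)) := by
                  have : ((1 + 1 - (k - (((m:ℤ)+1) - 1))).toNat : ℤ)
                      = (m : ℤ) + 2 - k := by omega
                  exact_mod_cast congrArg (fun z : ℤ => (z : ℝ)) this
                rw [hcast]
                have hkabs : |(k : ℝ)| = -(k : ℝ) := by
                  rw [abs_of_nonpos]; exact_mod_cast le_of_lt hk
                have hm : (m : ℝ) + 1 ≤ (j : ℝ) := by exact_mod_cast hn.2
                nlinarith [hk1, hkabs]
            _ ≤ ((j+2 : ℝ) * |(k : ℝ)|) ^ (j-1) := by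
                apply pow_le_pow_right₀
                · nlinarith [hk1]
                · omega
      _ = ((j+2 : ℝ) * |(k : ℝ)|)^(j-1) * (∏ i, e (a i)) * θ ^ (-k) := by ring
  -- assemble
  have hD : ‖stmt10D E j k‖ ≤ ((j+2 : ℝ) * |(k : ℝ)|)^(j-1) * C * θ ^ (-k) := by
    rw [stmt10D, hC]
    calc ‖∑ n ∈ Finset.Icc 1 j, ∑ a ∈ (Fintype.piFinset fun _ : Fin n => Finset.Icc 1 j).filter
          (fun a => ∑ i, a i = j),
          ∑ b ∈ (Fintype.piFinset fun _ : Fin n => Finset.Icc (k - ((n : ℤ) - 1)) 1).filter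
          (fun b => ∑ i, b i = k), (List.ofFn fun i => E (a i) (b i)).prod‖
        ≤ ∑ n ∈ Finset.Icc 1 j, ∑ a ∈ (Fintype.piFinset fun _ : Fin n => Finset.Icc 1 j).filter
          (fun a => ∑ i, a i = j),
          ‖∑ b ∈ (Fintype.piFinset fun _ : Fin n => Finset.Icc (k - ((n : ℤ) - 1)) 1).filter
          (fun b => ∑ i, b i = k), (List.ofFn fun i => E (a i) (b i)).prod‖ :=
          (norm_sum_le _ _).trans (Finset.sum_le_sum fun n _ => norm_sum_le _ _)
      _ ≤ ∑ n ∈ Finset.Icc 1 j, ∑ a ∈ (Fintype.piFinset fun _ : Fin n => Finset.Icc 1 j).filter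
          (fun a => ∑ i, a i = j),
          ((j+2 : ℝ) * |(k : ℝ)|)^(j-1) * (∏ i, e (a i)) * θ ^ (-k) :=
          Finset.sum_le_sum fun n hn => Finset.sum_le_sum fun a ha => key n hn a ha
      _ = ((j+2 : ℝ) * |(k : ℝ)|)^(j-1) * (∑ n ∈ Finset.Icc 1 j,
          ∑ a ∈ (Fintype.piFinset fun _ : Fin n => Finset.Icc 1 j).filter
          (fun a => ∑ i, a i = j), ∏ i, e (a i)) * θ ^ (-k) := by
          rw [Finset.mul_sum, Finset.sum_mul]
          refine Finset.sum_congr rfl fun n _ => ?_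
          rw [Finset.mul_sum, Finset.sum_mul]
  calc ‖stmt10D E j k‖ ≤ ((j+2 : ℝ) * |(k : ℝ)|)^(j-1) * C * θ ^ (-k) := hD
    _ = (j+2 : ℝ)^(j-1) * C * |(k : ℝ)| ^ (j - 1) * θ ^ (-k) := by
        rw [mul_pow]; ring
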